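/- If K is a class of finite L-structures with the Ramsey property in which every structure has trivial automorphism group, and the hereditary closure K* = {A : A ⊆ B for some B ∈ K} has the amalgamation property, then K* also has the Ramsey property. -/

import Mathlib

open FirstOrder

/-- A bundled finite `L`-structure. -/
structure FinStr (L : Language) where
  carrier : Type
  [str : L.Structure carrier]
  [fin : Finite carrier]

attribute [instance] FinStr.str FinStr.fin

/-- The copies of `A` in `C`: substructures of `C` isomorphic to `A`. -/
def Copies {L : Language} (A C : FinStr L) : Type :=
  {S : L.Substructure C.carrier // Nonempty (A.carrier ≃[L] S)}

/-- `C → (B)^A_k`: every `k`-coloring of the copies of `A` in `C` is constant on the copies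
of `A` lying inside some copy of `B` in `C`. -/
def ArrowsInto {L : Language} (A B C : FinStr L) (k : ℕ) : Prop :=
  ∀ col : Copies A C → Fin k,
    ∃ S : L.Substructure C.carrier, Nonempty (B.carrier ≃[L] S) ∧
      ∀ T T' : Copies A C, T.1 ≤ S → T'.1 ≤ S → col T = col T'

/-- A class `K` of finite `L`-structures has the Ramsey property if for all `A, B ∈ K` and
all `k` there is `C ∈ K` with `C → (B)^A_k`. -/
def HasRamsey {L : Language} (K : Set (FinStr L)) : Prop :=
  ∀ A ∈ K, ∀ B ∈ K, ∀ k : ℕ, ∃ C ∈ K, ArrowsInto A B C k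

/-- The hereditary closure `K* = {A : A ⊆ B for some B ∈ K}` (up to isomorphism). -/
def HeredCl {L : Language} (K : Set (FinStr L)) : Set (FinStr L) :=
  {A | ∃ B ∈ K, ∃ S : L.Substructure B.carrier, Nonempty (A.carrier ≃[L] S)}

/-- A class `K` has the amalgamation property. -/
def HasAmalgamation {L : Language} (K : Set (FinStr L)) : Prop :=
  ∀ A ∈ K, ∀ B ∈ K, ∀ C ∈ K, ∀ (f : A.carrier ↪[L] B.carrier) (g : A.carrier ↪[L] C.carrier),
    ∃ D ∈ K, ∃ (h : B.carrier ↪[L] D.carrier) (l : C.carrier ↪[L] D.carrier),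
      ∀ x : A.carrier, h (f x) = l (g x)

-- AUX START
namespace RamseyAux

open FirstOrder Language

variable {L : Language}

/-- The copy of `A` in `C` given by an embedding. -/
noncomputable def copyOfEmb (A C : FinStr L) (f : A.carrier ↪[L] C.carrier) : Copies A C :=
  ⟨f.toHom.range, ⟨f.equivRange⟩⟩

/-- A chosen embedding realizing a copy. -/
noncomputable def embOf {A C : FinStr L} (T : Copies A C) : A.carrier ↪[L] C.carrier :=
  T.1.subtype.comp (Classical.choice T.2).toEmbedding

lemma embOf_apply {A C : FinStr L} (T : Copies A C) (x : A.carrier) :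
    embOf T x = ((Classical.choice T.2) x : C.carrier) := rfl

lemma embOf_mem {A C : FinStr L} (T : Copies A C) (x : A.carrier) :
    embOf T x ∈ T.1 := by
  rw [embOf_apply]; exact ((Classical.choice T.2) x).2

lemma range_embOf {A C : FinStr L} (T : Copies A C) :
    (embOf T).toHom.range = T.1 := by
  ext x
  rw [Hom.mem_range]
  constructor
  · rintro ⟨y, rfl⟩; exact embOf_mem T y
  · intro hx
    refine ⟨(Classical.choice T.2).symm ⟨x, hx⟩, ?_⟩
    show embOf T ((Classical.choice T.2).symm ⟨x, hx⟩) = x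
    rw [embOf_apply, Language.Equiv.apply_symm_apply]

lemma finite_copies (A B : FinStr L) : Finite (Copies A B) := by
  have : Finite (L.Substructure B.carrier) :=
    Finite.of_injective (fun S => (S : Set B.carrier)) SetLike.coe_injective
  exact Subtype.finite

lemma K_subset_heredCl (K : Set (FinStr L)) : K ⊆ HeredCl K := fun A hA =>
  ⟨A, hA, ⊤, ⟨Substructure.topEquiv.symm⟩⟩

/-- Rigidity: the chosen embedding of the copy generated by `g` is `g` itself. -/
lemma embOf_copyOfEmb {A' C : FinStr L}
    (hr : ∀ σ : A'.carrier ≃[L] A'.carrier, ∀ x : A'.carrier, σ x = x)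
    (g : A'.carrier ↪[L] C.carrier) : embOf (copyOfEmb A' C g) = g := by
  apply Embedding.ext
  intro x
  set j := Classical.choice (copyOfEmb A' C g).2 with hj
  have key : j x = g.equivRange x := by
    have h1 := hr (g.equivRange.symm.comp j) x
    change g.equivRange.symm (j x) = x at h1
    have := congrArg g.equivRange h1
    erw [Language.Equiv.apply_symm_apply] at this
    exact this
  show ((j x : _) : C.carrier) = g x
  rw [key, Embedding.equivRange_apply]

end RamseyAux
-- AUX END

section
open RamseyAux FirstOrder.Language

/-- If `K` is a class of finite `L`-structures with the Ramsey property in which every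
structure has trivial automorphism group, and its hereditary closure `K*` has the
amalgamation property, then `K*` also has the Ramsey property. -/
theorem stmt_15 {L : Language} (K : Set (FinStr L))
    (hK : HasRamsey K)
    (hrigid : ∀ A ∈ K, ∀ σ : A.carrier ≃[L] A.carrier, ∀ x : A.carrier, σ x = x)
    (hamalg : HasAmalgamation (HeredCl K)) :
    HasRamsey (HeredCl K) := by
  intro A hA B hB k
  have hKsub := K_subset_heredCl K
  obtain ⟨A', hA', SA, ⟨ia⟩⟩ := id hA
  set eA : A.carrier ↪[L] A'.carrier := SA.subtype.comp ia.toEmbedding with heA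
  -- Step 1: extend B so that every copy of A in B extends to a designated copy of A'.
  have key : ∀ l : List (Copies A B), ∃ B₁ ∈ HeredCl K,
      ∃ β : B.carrier ↪[L] B₁.carrier, ∀ T ∈ l,
        ∃ g : A'.carrier ↪[L] B₁.carrier, ∀ x, g (eA x) = β (embOf T x) := by
    intro l
    induction l with
    | nil => exact ⟨B, hB, Language.Embedding.refl L _, by simp⟩
    | cons T l ih =>
      obtain ⟨B₁, hB₁, β, hβ⟩ := ih
      obtain ⟨D, hD, h, l', hcomm⟩ :=
        hamalg A hA B₁ hB₁ A' (hKsub hA') (β.comp (embOf T)) eA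
      refine ⟨D, hD, h.comp β, ?_⟩
      rintro T' hT'
      rcases List.mem_cons.1 hT' with rfl | hT'
      · refine ⟨l', fun x => ?_⟩
        have h2 := hcomm x
        simp only [Language.Embedding.comp_apply] at h2 ⊢
        exact h2.symm
      · obtain ⟨g, hg⟩ := hβ T' hT'
        refine ⟨h.comp g, fun x => ?_⟩
        simp only [Language.Embedding.comp_apply]
        exact congrArg h (hg x)
  have : Fintype (Copies A B) := @Fintype.ofFinite _ (finite_copies A B)
  obtain ⟨B₁, hB₁, β, hext'⟩ := key Finset.univ.toList
  have hext : ∀ T : Copies A B, ∃ g : A'.carrier ↪[L] B₁.carrier,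
      ∀ x, g (eA x) = β (embOf T x) :=
    fun T => hext' T (by simp [Finset.mem_toList])
  -- Step 2: put B₁ inside some B' ∈ K.
  obtain ⟨B', hB', SB, ⟨ib⟩⟩ := hB₁
  set μ : B₁.carrier ↪[L] B'.carrier := SB.subtype.comp ib.toEmbedding with hμ
  -- Step 3: Ramsey in K for (A', B').
  obtain ⟨C, hC, harr⟩ := hK A' hA' B' hB' k
  refine ⟨C, hKsub hC, ?_⟩
  intro col
  -- the designated sub-copy of A in a copy of A'
  set desig : Copies A' C → Copies A C :=
    fun S' => copyOfEmb A C ((embOf S').comp eA) with hdesig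
  obtain ⟨Sstar, ⟨j⟩, hmono⟩ := harr (col ∘ desig)
  set ι : B'.carrier ↪[L] C.carrier := Sstar.subtype.comp j.toEmbedding with hι
  have hιmem : ∀ x, ι x ∈ Sstar := fun x => (j x).2
  set ν : B.carrier ↪[L] C.carrier := ι.comp (μ.comp β) with hν
  refine ⟨ν.toHom.range, ⟨ν.equivRange⟩, ?_⟩
  have hA'rig := hrigid A' hA'
  have main : ∀ T : Copies A C, T.1 ≤ ν.toHom.range →
      ∃ U : Copies A' C, U.1 ≤ Sstar ∧ desig U = T := by
    intro T hT
    obtain ⟨i⟩ := T.2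
    set t : A.carrier ↪[L] B.carrier :=
      (ν.equivRange.symm.toEmbedding.comp (Substructure.inclusion hT)).comp i.toEmbedding
      with hti
    have hνsymm : ∀ y : ν.toHom.range, ν (ν.equivRange.symm y) = (y : C.carrier) := by
      intro y
      rw [← Language.Embedding.equivRange_apply ν (ν.equivRange.symm y),
        Language.Equiv.apply_symm_apply]
    have ht : ∀ x, ν (t x) = ((i x : _) : C.carrier) := by
      intro x
      show ν (ν.equivRange.symm (Substructure.inclusion hT (i x))) = _
      rw [hνsymm]
      rfl
    set T₀ : Copies A B := copyOfEmb A B t with hT₀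
    obtain ⟨g₁, hg₁⟩ := hext T₀
    set g : A'.carrier ↪[L] C.carrier := (ι.comp μ).comp g₁ with hg
    have hgemb : ∀ x, g (eA x) = ν (embOf T₀ x) := by
      intro x
      exact congrArg (ι.comp μ) (hg₁ x)
    refine ⟨copyOfEmb A' C g, ?_, ?_⟩
    · intro x hx
      rw [show (copyOfEmb A' C g).1 = g.toHom.range from rfl, Hom.mem_range] at hx
      obtain ⟨y, rfl⟩ := hx
      exact hιmem (μ (g₁ y))
    · apply Subtype.ext
      show ((embOf (copyOfEmb A' C g)).comp eA).toHom.range = T.1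
      rw [embOf_copyOfEmb hA'rig g]
      ext x
      rw [Hom.mem_range]
      constructor
      · rintro ⟨y, rfl⟩
        show g (eA y) ∈ T.1
        rw [hgemb y]
        have : embOf T₀ y ∈ T₀.1 := embOf_mem T₀ y
        rw [show T₀.1 = t.toHom.range from rfl, Hom.mem_range] at this
        obtain ⟨a, ha⟩ := this
        rw [← ha]
        show ν (t a) ∈ T.1
        rw [ht a]
        exact (i a).2
      · intro hx
        set a := i.symm ⟨x, hx⟩ with ha
        have hta : t a ∈ (embOf T₀).toHom.range := by
          rw [range_embOf, show T₀.1 = t.toHom.range from rfl]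
          exact Hom.mem_range.2 ⟨a, rfl⟩
        obtain ⟨y, hy⟩ := Hom.mem_range.1 hta
        refine ⟨y, ?_⟩
        show g (eA y) = x
        rw [hgemb y]
        rw [show ((embOf T₀).toHom y) = embOf T₀ y from rfl] at hy
        rw [hy, ht a, ha, Language.Equiv.apply_symm_apply]
  intro T T' hT hT'
  obtain ⟨U, hU, hdU⟩ := main T hT
  obtain ⟨U', hU', hdU'⟩ := main T' hT'
  have := hmono U U' hU hU'
  simpa [Function.comp, hdU, hdU'] using this

end
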